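/- arXiv:2112.05460 — 3 statements merged into one kernel-verified Lean document; each statement's English description precedes it below -/
import Mathlib

section
/- Let M be an n×n complex matrix and k ∈ {1, ..., n}. Then the (n−k)-th derivative of the characteristic polynomial of M equals (n−k)! times the sum, over all subsets α of {1,...,n} of size k, of the characteristic polynomials of the principal submatrices M[α]. -/
open Polynomial Matrix Finset

variable {R : Type*} [CommRing R]

-- congruence of dets of submatrices along an equiv
lemma det_submatrix_congr {n : Type*} [Fintype n] [DecidableEq n]
    {ι κ : Type*} [Fintype ι] [DecidableEq ι] [Fintype κ] [DecidableEq κ]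
    (A : Matrix n n R) (f : ι → n) (g : κ → n) (e : ι ≃ κ) (h : ∀ i, g (e i) = f i) :
    (A.submatrix f f).det = (A.submatrix g g).det := by
  have hge : g ∘ e = f := funext h
  rw [← Matrix.det_submatrix_equiv_self e (A.submatrix g g), Matrix.submatrix_submatrix, hge]

-- pivot lemma
lemma det_piecewise_single {ι : Type*} [Fintype ι] [DecidableEq ι]
    (A : Matrix ι ι R) (s : Finset ι) (x : R) :
    (Matrix.of fun i j => if i ∈ s then (if i = j then x else 0) else A i j).det
      = x ^ s.card *
        (A.submatrix (Subtype.val : {a // a ∉ s} → ι) Subtype.val).det := by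
  classical
  set B := (Matrix.of fun i j => if i ∈ s then (if i = j then x else 0) else A i j) with hB
  let e : {a // a ∈ s} ⊕ {a // ¬ a ∈ s} ≃ ι := Equiv.sumCompl (· ∈ s)
  have h1 : B.det = (B.submatrix e e).det := (Matrix.det_submatrix_equiv_self e B).symm
  have h2 : B.submatrix e e =
      Matrix.fromBlocks (x • (1 : Matrix {a // a ∈ s} {a // a ∈ s} R)) 0
        (Matrix.of fun (i : {a // ¬ a ∈ s}) (j : {a // a ∈ s}) => A i.1 j.1)
        (A.submatrix (Subtype.val : {a // ¬ a ∈ s} → ι) Subtype.val) := by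
    ext i j
    cases i with
    | inl i => cases j with
      | inl j =>
        simp only [Matrix.submatrix_apply, hB, Matrix.of_apply, e,
          Equiv.sumCompl_apply_inl]
        rw [if_pos i.2]
        simp only [Matrix.fromBlocks_apply₁₁, Matrix.smul_apply, Matrix.one_apply, Subtype.ext_iff,
          smul_eq_mul, mul_ite, mul_one, mul_zero]
      | inr j =>
        simp only [Matrix.submatrix_apply, hB, Matrix.of_apply, e,
          Equiv.sumCompl_apply_inl, Equiv.sumCompl_apply_inr]
        rw [if_pos i.2]
        have : (i : ι) ≠ (j : ι) := fun hij => j.2 (hij ▸ i.2)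
        simp [this, Matrix.fromBlocks]
    | inr i => cases j with
      | inl j =>
        simp only [Matrix.submatrix_apply, hB, Matrix.of_apply, e,
          Equiv.sumCompl_apply_inl, Equiv.sumCompl_apply_inr]
        rw [if_neg i.2]
        simp [Matrix.fromBlocks]
      | inr j =>
        simp only [Matrix.submatrix_apply, hB, Matrix.of_apply, e,
          Equiv.sumCompl_apply_inr]
        rw [if_neg i.2]
        simp [Matrix.fromBlocks]
  rw [h1, h2, Matrix.det_fromBlocks_zero₁₂, Matrix.det_smul, Matrix.det_one,
    Fintype.card_coe, mul_one]


lemma charpoly_eq_sum_minors {ι : Type*} [Fintype ι] [DecidableEq ι] (M : Matrix ι ι R) :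
    M.charpoly = ∑ s : Finset ι, X ^ s.card *
      C (((-M).submatrix (Subtype.val : {a // a ∉ s} → ι) Subtype.val).det) := by
  classical
  have hch : charmatrix M =
      (fun i => Matrix.scalar ι (X : R[X]) i) + (fun i => ((-M).map C) i) := by
    funext i j
    by_cases h : i = j <;>
      simp [charmatrix_apply, Matrix.map_apply, sub_eq_add_neg, Matrix.scalar_apply,
        Matrix.diagonal_apply, h]
  have expand := MultilinearMap.map_add_univ
    (Matrix.detRowAlternating : (ι → R[X]) [⋀^ι]→ₗ[R[X]] R[X]).toMultilinearMap
    (fun i => Matrix.scalar ι (X : R[X]) i) (fun i => ((-M).map C) i)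
  have hpw : ∀ s : Finset ι,
      s.piecewise (fun i => Matrix.scalar ι (X : R[X]) i) (fun i => ((-M).map C) i) =
        Matrix.of (fun i j => if i ∈ s then (if i = j then (X : R[X]) else 0)
          else (((-M).map C) i j)) := by
    intro s; funext i j
    by_cases h : i ∈ s <;>
      simp [Finset.piecewise, h, Matrix.scalar_apply, Matrix.diagonal_apply]
  have hdet : M.charpoly = ∑ s : Finset ι,
      (Matrix.of (fun i j => if i ∈ s then (if i = j then (X : R[X]) else 0)
        else (((-M).map C) i j))).det := by
    rw [Matrix.charpoly]
    have h0 : (charmatrix M).det =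
        (Matrix.detRowAlternating : (ι → R[X]) [⋀^ι]→ₗ[R[X]] R[X]).toMultilinearMap
          (charmatrix M) := rfl
    rw [h0, hch, expand]
    exact Finset.sum_congr rfl fun s _ => by rw [hpw s]; rfl
  rw [hdet]
  refine Finset.sum_congr rfl fun s _ => ?_
  rw [det_piecewise_single ((-M).map C) s (X : R[X]), Matrix.submatrix_map,
    ← RingHom.mapMatrix_apply, ← RingHom.map_det]

noncomputable def pminor {ι : Type*} [Fintype ι] [DecidableEq ι]
    (M : Matrix ι ι R) (t : Finset ι) : R :=
  (M.submatrix (fun i : {a // a ∈ t} => (i : ι)) (fun i : {a // a ∈ t} => (i : ι))).det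

lemma charpoly_eq_sum_pminor {ι : Type*} [Fintype ι] [DecidableEq ι] (M : Matrix ι ι R) :
    M.charpoly = ∑ s : Finset ι, X ^ (Fintype.card ι - s.card) * C (pminor (-M) s) := by
  rw [charpoly_eq_sum_minors]
  refine (Fintype.sum_equiv
    (Function.Involutive.toPerm _ (fun s : Finset ι => compl_compl s)) _ _ fun s => ?_).symm
  have h1 : Fintype.card ι - s.card = (sᶜ).card := (Finset.card_compl s).symm
  have h2 : pminor (-M) s =
      ((-M).submatrix (Subtype.val : {a // a ∉ sᶜ} → ι) Subtype.val).det :=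
    det_submatrix_congr (-M) _ _ (Equiv.subtypeEquivRight (fun a => by simp)) (fun i => rfl)
  rw [h1, h2]
  rfl

lemma charpoly_submatrix_eq_sum_pminor {ι : Type*} [Fintype ι] [DecidableEq ι]
    (M : Matrix ι ι R) (α : Finset ι) :
    (M.submatrix (fun i : {a // a ∈ α} => (i : ι)) (fun i : {a // a ∈ α} => (i : ι))).charpoly
      = ∑ t ∈ α.powerset, X ^ (α.card - t.card) * C (pminor (-M) t) := by
  classical
  set N := M.submatrix (fun i : {a // a ∈ α} => (i : ι)) (fun i : {a // a ∈ α} => (i : ι))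
    with hN
  rw [charpoly_eq_sum_pminor]
  refine Finset.sum_nbij' (i := fun u => u.map (Function.Embedding.subtype (· ∈ α)))
    (j := fun t => t.subtype (· ∈ α)) ?_ ?_ ?_ ?_ ?_
  · intro u _
    rw [Finset.mem_powerset]
    intro a ha
    exact Finset.property_of_mem_map_subtype _ ha
  · intro t _
    exact Finset.mem_univ _
  · intro u _
    ext b
    simp
  · intro t ht
    rw [Finset.mem_powerset] at ht
    exact Finset.subtype_map_of_mem fun x hx => ht hx
  · intro u _
    have hcard : (u.map (Function.Embedding.subtype (· ∈ α))).card = u.card :=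
      Finset.card_map _
    have hcoe : Fintype.card {a // a ∈ α} = α.card := Fintype.card_coe α
    have hpm : pminor (-N) u = pminor (-M) (u.map (Function.Embedding.subtype (· ∈ α))) := by
      have hsub : -N = (-M).submatrix (fun i : {a // a ∈ α} => (i : ι))
          (fun i : {a // a ∈ α} => (i : ι)) := rfl
      rw [pminor, hsub, Matrix.submatrix_submatrix, pminor]
      let e : {b : {a // a ∈ α} // b ∈ u} ≃
          {a // a ∈ u.map (Function.Embedding.subtype (· ∈ α))} :=
        ⟨fun b => ⟨b.1.1, Finset.mem_map_of_mem _ b.2⟩,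
          fun a => ⟨⟨a.1, Finset.property_of_mem_map_subtype _ a.2⟩, by
            obtain ⟨b, hb, hba⟩ := Finset.mem_map.mp a.2
            have : b = ⟨a.1, Finset.property_of_mem_map_subtype _ a.2⟩ :=
              Subtype.ext (by simpa using hba)
            exact this ▸ hb⟩,
          fun b => by ext; rfl, fun a => by ext; rfl⟩
      exact det_submatrix_congr (-M) _ _ e (fun i => rfl)
    rw [hcard, hcoe, hpm]

lemma card_superset_filter {ι : Type*} [Fintype ι] [DecidableEq ι]
    (t : Finset ι) (k : ℕ) (htk : t.card ≤ k) :
    ((Finset.powersetCard k (Finset.univ : Finset ι)).filter (fun α => t ⊆ α)).card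
      = (Fintype.card ι - t.card).choose (k - t.card) := by
  classical
  have h : ((Finset.powersetCard k (Finset.univ : Finset ι)).filter (fun α => t ⊆ α)).card
      = (Finset.powersetCard (k - t.card) tᶜ).card := by
    refine Finset.card_nbij' (i := fun α => α \ t) (j := fun β => β ∪ t) ?_ ?_ ?_ ?_
    · intro α hα
      rw [Finset.mem_coe, Finset.mem_filter, Finset.mem_powersetCard_univ] at hα
      rw [Finset.mem_coe, Finset.mem_powersetCard]
      refine ⟨fun x hx => ?_, ?_⟩
      · rw [Finset.mem_compl]
        exact (Finset.mem_sdiff.mp hx).2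
      · rw [Finset.card_sdiff_of_subset hα.2, hα.1]
    · intro β hβ
      rw [Finset.mem_coe, Finset.mem_powersetCard] at hβ
      have hdisj : Disjoint β t := Finset.disjoint_left.mpr fun x hx =>
        Finset.mem_compl.mp (hβ.1 hx)
      rw [Finset.mem_coe, Finset.mem_filter, Finset.mem_powersetCard_univ]
      constructor
      · rw [Finset.card_union_of_disjoint hdisj, hβ.2]
        omega
      · exact Finset.subset_union_right
    · intro α hα
      rw [Finset.mem_coe, Finset.mem_filter] at hα
      exact Finset.sdiff_union_of_subset hα.2
    · intro β hβ
      rw [Finset.mem_coe, Finset.mem_powersetCard] at hβ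
      have hdisj : Disjoint β t := Finset.disjoint_left.mpr fun x hx =>
        Finset.mem_compl.mp (hβ.1 hx)
      show (β ∪ t) \ t = β
      rw [Finset.union_sdiff_right]
      exact Finset.sdiff_eq_self_of_disjoint hdisj
  rw [h, Finset.card_powersetCard, Finset.card_compl]

theorem stmt_4 (n k : ℕ) (hk1 : 1 ≤ k) (hkn : k ≤ n)
    (M : Matrix (Fin n) (Fin n) ℂ) :
    derivative^[n - k] M.charpoly =
      (n - k).factorial •
        ∑ s : {s : Finset (Fin n) // s.card = k},
          (M.submatrix (fun i => ((s.1.orderIsoOfFin s.2 i : Fin n)))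
            (fun i => ((s.1.orderIsoOfFin s.2 i : Fin n)))).charpoly := by
  classical
  set d := n - k with hd
  have hsummand : ∀ s : {s : Finset (Fin n) // s.card = k},
      (M.submatrix (fun i => ((s.1.orderIsoOfFin s.2 i : Fin n)))
        (fun i => ((s.1.orderIsoOfFin s.2 i : Fin n)))).charpoly
      = ∑ t ∈ s.1.powerset, X ^ (k - t.card) * C (pminor (-M) t) := by
    intro s
    have he : M.submatrix (fun i => ((s.1.orderIsoOfFin s.2 i : Fin n)))
        (fun i => ((s.1.orderIsoOfFin s.2 i : Fin n)))
      = (M.submatrix (fun i : {a // a ∈ s.1} => (i : Fin n))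
          (fun i : {a // a ∈ s.1} => (i : Fin n))).submatrix
          (s.1.orderIsoOfFin s.2).toEquiv (s.1.orderIsoOfFin s.2).toEquiv := by
      rw [Matrix.submatrix_submatrix]; rfl
    have he2 : (M.submatrix (fun i : {a // a ∈ s.1} => (i : Fin n))
          (fun i : {a // a ∈ s.1} => (i : Fin n))).submatrix
          (s.1.orderIsoOfFin s.2).toEquiv (s.1.orderIsoOfFin s.2).toEquiv
        = Matrix.reindex (s.1.orderIsoOfFin s.2).toEquiv.symm
            (s.1.orderIsoOfFin s.2).toEquiv.symm
            (M.submatrix (fun i : {a // a ∈ s.1} => (i : Fin n))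
              (fun i : {a // a ∈ s.1} => (i : Fin n))) := by
      rw [Matrix.reindex_apply, Equiv.symm_symm]
    rw [he, he2, Matrix.charpoly_reindex, charpoly_submatrix_eq_sum_pminor, s.2]
  have hRHS : (∑ s : {s : Finset (Fin n) // s.card = k},
        (M.submatrix (fun i => ((s.1.orderIsoOfFin s.2 i : Fin n)))
          (fun i => ((s.1.orderIsoOfFin s.2 i : Fin n)))).charpoly)
      = ∑ t : Finset (Fin n),
          ((Finset.powersetCard k (Finset.univ : Finset (Fin n))).filter
            (fun α => t ⊆ α)).card • (X ^ (k - t.card) * C (pminor (-M) t)) := by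
    calc (∑ s : {s : Finset (Fin n) // s.card = k},
          (M.submatrix (fun i => ((s.1.orderIsoOfFin s.2 i : Fin n)))
            (fun i => ((s.1.orderIsoOfFin s.2 i : Fin n)))).charpoly)
        = ∑ s : {s : Finset (Fin n) // s.card = k},
            ∑ t ∈ s.1.powerset, X ^ (k - t.card) * C (pminor (-M) t) :=
          Finset.sum_congr rfl fun s _ => hsummand s
      _ = ∑ α ∈ Finset.powersetCard k (Finset.univ : Finset (Fin n)),
            ∑ t ∈ α.powerset, X ^ (k - t.card) * C (pminor (-M) t) :=
          (Finset.sum_subtype _ (fun s => Finset.mem_powersetCard_univ)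
            (fun α => ∑ t ∈ α.powerset, X ^ (k - t.card) * C (pminor (-M) t))).symm
      _ = ∑ t ∈ (Finset.univ : Finset (Fin n)).powerset,
            ∑ α ∈ (Finset.powersetCard k (Finset.univ : Finset (Fin n))).filter
              (fun α => t ⊆ α), X ^ (k - t.card) * C (pminor (-M) t) :=
          Finset.sum_comm' (by
            intro α t
            simp only [Finset.mem_filter, Finset.mem_powerset, Finset.subset_univ,
              and_true])
      _ = ∑ t : Finset (Fin n),
            ((Finset.powersetCard k (Finset.univ : Finset (Fin n))).filter
              (fun α => t ⊆ α)).card • (X ^ (k - t.card) * C (pminor (-M) t)) := by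
          rw [Finset.powerset_univ]
          exact Finset.sum_congr rfl fun t _ => Finset.sum_const _
  rw [hRHS, charpoly_eq_sum_pminor M, Polynomial.iterate_derivative_sum, Finset.smul_sum]
  refine Finset.sum_congr rfl fun t _ => ?_
  simp only [Fintype.card_fin]
  rw [mul_comm, Polynomial.iterate_derivative_C_mul,
    Polynomial.iterate_derivative_X_pow_eq_smul]
  have htn : t.card ≤ n := by
    simpa [Fintype.card_fin] using Finset.card_le_univ t
  by_cases h : t.card ≤ k
  · have h1 : n - t.card - d = k - t.card := by omega
    have h2 : (n - t.card).descFactorial d = d.factorial *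
        ((Finset.powersetCard k (Finset.univ : Finset (Fin n))).filter
          (fun α => t ⊆ α)).card := by
      rw [card_superset_filter t k h, Fintype.card_fin,
        Nat.descFactorial_eq_factorial_mul_choose]
      congr 1
      have h3 : k - t.card = (n - t.card) - d := by omega
      rw [h3, Nat.choose_symm (by omega : d ≤ n - t.card)]
    rw [h1, h2, mul_smul_comm, smul_smul, mul_comm (C (pminor (-M) t))]
    exact Nat.cast_smul_eq_nsmul ℂ _ _
  · have hlt : n - t.card < d := by omega
    have hzero : (n - t.card).descFactorial d = 0 :=
      Nat.descFactorial_eq_zero_iff_lt.mpr hlt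
    have hempty : ((Finset.powersetCard k (Finset.univ : Finset (Fin n))).filter
        (fun α => t ⊆ α)) = ∅ := by
      refine Finset.filter_eq_empty_iff.mpr fun {α} hα hsub => h ?_
      rw [Finset.mem_powersetCard_univ] at hα
      exact hα ▸ Finset.card_le_card hsub
    rw [hzero, hempty, Finset.card_empty]
    simp only [Nat.cast_zero, zero_smul, smul_zero, mul_zero]
end

section
/- Let M be an n×n complex matrix that is k-spectrally monomorphic (1 ≤ k ≤ n), and let Q be the common characteristic polynomial of its k×k principal submatrices. Then the (n−k)-th derivative of the characteristic polynomial of M equals (n!/k!)·Q. -/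
open Polynomial Matrix

/-- `M` is `k`-spectrally monomorphic: all `k × k` principal submatrices of `M`
have the same characteristic polynomial. -/
def SpecMono {n : ℕ} (k : ℕ) (M : Matrix (Fin n) (Fin n) ℂ) : Prop :=
  ∀ f g : Fin k → Fin n, Function.Injective f → Function.Injective g →
    (M.submatrix f f).charpoly = (M.submatrix g g).charpoly



lemma derivative_finset_prod {ι : Type*} [DecidableEq ι] (s : Finset ι) (f : ι → Polynomial ℂ) :
    derivative (∏ i ∈ s, f i) = ∑ i ∈ s, (∏ j ∈ s.erase i, f j) * derivative (f i) := by
  induction s using Finset.induction_on with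
  | empty => simp
  | @insert a s ha ih =>
    rw [Finset.prod_insert ha, derivative_mul, ih, Finset.sum_insert ha,
      Finset.erase_insert ha, Finset.mul_sum]
    congr 1
    · exact mul_comm _ _
    refine Finset.sum_congr rfl fun i hi => ?_
    rw [Finset.erase_insert_of_ne (ne_of_mem_of_not_mem hi ha).symm,
      Finset.prod_insert (fun h => ha (Finset.erase_subset _ _ h)), mul_assoc]

lemma charmatrix_submatrix_inj {m n : ℕ} (M : Matrix (Fin n) (Fin n) ℂ)
    (f : Fin m → Fin n) (hf : Function.Injective f) :
    charmatrix (M.submatrix f f) = (charmatrix M).submatrix f f := by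
  refine Matrix.ext fun a b => ?_
  by_cases hab : a = b
  · subst hab; simp [charmatrix_apply_eq]
  · rw [charmatrix_apply_ne _ _ _ hab, Matrix.submatrix_apply, Matrix.submatrix_apply,
      charmatrix_apply_ne _ _ _ (fun h => hab (hf h))]

lemma derivative_charpoly_succ {m : ℕ} (N : Matrix (Fin (m+1)) (Fin (m+1)) ℂ) :
    derivative N.charpoly
      = ∑ j : Fin (m+1), (N.submatrix (Fin.succAbove j) (Fin.succAbove j)).charpoly := by
  set A := charmatrix N with hA
  have key : ∀ j : Fin (m+1),
      det (A.updateCol j (Pi.single j 1))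
        = (N.submatrix (Fin.succAbove j) (Fin.succAbove j)).charpoly := by
    intro j
    rw [← Matrix.det_transpose, ← Matrix.updateRow_transpose, ← Matrix.adjugate_apply,
      Matrix.adjugate_fin_succ_eq_det_submatrix, ← Matrix.transpose_submatrix,
      Matrix.det_transpose, Matrix.charpoly,
      charmatrix_submatrix_inj _ _ Fin.succAbove_right_injective]
    have hsign : ((-1 : Polynomial ℂ)) ^ ((j : ℕ) + (j : ℕ)) = 1 := by
      rw [← two_mul, pow_mul]; norm_num
    rw [hsign, one_mul]
  calc derivative N.charpoly
      = ∑ i : Fin (m+1), det (A.updateCol i (Pi.single i 1)) := by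
        rw [Matrix.charpoly, ← hA, Matrix.det_apply, derivative_sum]
        have lhs_eq : ∀ σ : Equiv.Perm (Fin (m+1)),
            derivative (Equiv.Perm.sign σ • ∏ i, A (σ i) i)
              = ∑ i : Fin (m+1), Equiv.Perm.sign σ •
                  ((if σ i = i then (1 : Polynomial ℂ) else 0) *
                    ∏ j ∈ Finset.univ.erase i, A (σ j) j) := by
          intro σ
          rw [derivative_smul, derivative_finset_prod, Finset.smul_sum]
          refine Finset.sum_congr rfl fun i _ => ?_
          congr 1
          rw [mul_comm]
          congr 1
          by_cases h : σ i = i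
          · rw [hA, h, charmatrix_apply_eq]; simp [h]
          · rw [hA, charmatrix_apply_ne _ _ _ h]; simp [h]
        rw [Finset.sum_congr rfl fun σ _ => lhs_eq σ, Finset.sum_comm]
        refine Finset.sum_congr rfl fun i _ => ?_
        rw [Matrix.det_apply]
        refine Finset.sum_congr rfl fun σ _ => ?_
        congr 1
        rw [← Finset.mul_prod_erase _ _ (Finset.mem_univ i)]
        congr 1
        · rw [Matrix.updateCol_apply, if_pos rfl]
          simp [Pi.single_apply]
        · refine Finset.prod_congr rfl fun j hj => ?_
          rw [Matrix.updateCol_apply, if_neg (Finset.ne_of_mem_erase hj)]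
    _ = ∑ j : Fin (m+1), (N.submatrix (Fin.succAbove j) (Fin.succAbove j)).charpoly :=
        Finset.sum_congr rfl fun i _ => key i

lemma aux_main (k : ℕ) (Q : Polynomial ℂ) :
    ∀ m, k ≤ m → ∀ N : Matrix (Fin m) (Fin m) ℂ,
      (∀ f : Fin k → Fin m, Function.Injective f → (N.submatrix f f).charpoly = Q) →
      derivative^[m - k] N.charpoly = (m.factorial / k.factorial) • Q := by
  intro m hm
  induction m, hm using Nat.le_induction with
  | base =>
    intro N hN
    rw [Nat.sub_self, Function.iterate_zero_apply, Nat.div_self k.factorial_pos, one_smul,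
      ← hN id Function.injective_id, Matrix.submatrix_id_id]
  | succ m hm ih =>
    intro N hN
    have hsub : m + 1 - k = (m - k) + 1 := by omega
    rw [hsub, Function.iterate_succ_apply, derivative_charpoly_succ, iterate_derivative_sum]
    have hterm : ∀ j : Fin (m+1), j ∈ (Finset.univ : Finset (Fin (m+1))) →
        derivative^[m-k] (N.submatrix (Fin.succAbove j) (Fin.succAbove j)).charpoly
          = (m.factorial / k.factorial) • Q := by
      intro j _
      refine ih _ fun f hf => ?_
      rw [Matrix.submatrix_submatrix]
      exact hN _ ((Fin.succAbove_right_injective).comp hf)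
    rw [Finset.sum_congr rfl hterm, Finset.sum_const, Finset.card_univ, Fintype.card_fin,
      smul_smul]
    congr 1
    rw [Nat.factorial_succ, Nat.mul_div_assoc _ (Nat.factorial_dvd_factorial hm)]

theorem stmt_5 (n k : ℕ) (hk1 : 1 ≤ k) (hkn : k ≤ n)
    (M : Matrix (Fin n) (Fin n) ℂ) (Q : Polynomial ℂ)
    (hQ : ∀ f : Fin k → Fin n, Function.Injective f → (M.submatrix f f).charpoly = Q) :
    derivative^[n - k] M.charpoly = (n.factorial / k.factorial) • Q :=
  aux_main k Q n hkn M hQ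
end

section
/- Let M be an n×n complex matrix, k ∈ {3, ..., n−1}, and p ≤ k. If M is k-spectrally monomorphic, then for every subset β ⊆ {1,...,n} with |β| ≤ n−k, the sum of det M[α] over all subsets α of {1,...,n} with α ⊇ β and |α| = p depends only on the cardinality of β; that is, if β and β' are two subsets of size at most n−k with |β| = |β'|, then Σ_{α ⊇ β, |α|=p} det M[α] = Σ_{α ⊇ β', |α|=p} det M[α]. -/
open Polynomial Matrix

/-- The determinant of the principal submatrix `M[α]` of `M` whose rows and columns
are indexed by the subset `α`. -/
def principalDet {n : ℕ} (M : Matrix (Fin n) (Fin n) ℂ) (α : Finset (Fin n)) : ℂ :=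
  (M.submatrix (fun i : {x // x ∈ α} => (i : Fin n))
    (fun i : {x // x ∈ α} => (i : Fin n))).det

/-! ### Auxiliary lemmas -/

def Jmat (m : ℕ) : Matrix (Fin m) (Fin m) ℂ := Matrix.of fun i j => if i = j then 1 else 0

lemma Jmat_eq_one (m : ℕ) : Jmat m = 1 := by
  ext i j; simp [Jmat, Matrix.one_apply]

lemma det_piecewise_one {m : ℕ} (A : Matrix (Fin m) (Fin m) ℂ) (s : Finset (Fin m)) :
    Matrix.det (Matrix.of (s.piecewise A (Jmat m))) = principalDet A s := by
  classical
  set B : Matrix (Fin m) (Fin m) ℂ := Matrix.of (s.piecewise A (Jmat m)) with hBdef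
  let e : {x // x ∈ s} ⊕ {x // ¬ x ∈ s} ≃ Fin m := Equiv.sumCompl (· ∈ s)
  have hB : B.submatrix e e = Matrix.fromBlocks
      (A.submatrix (fun i : {x // x ∈ s} => (i : Fin m)) (fun i : {x // x ∈ s} => (i : Fin m)))
      (A.submatrix (fun i : {x // x ∈ s} => (i : Fin m)) (fun j : {x // ¬ x ∈ s} => (j : Fin m)))
      0 1 := by
    ext i j
    cases i with
    | inl a =>
      cases j with
      | inl b =>
        simp [hBdef, e, Matrix.submatrix_apply, Finset.piecewise, a.2]
      | inr b =>
        simp [hBdef, e, Matrix.submatrix_apply, Finset.piecewise, a.2]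
    | inr a =>
      cases j with
      | inl b =>
        have hab : (a : Fin m) ≠ (b : Fin m) := fun h => a.2 (h ▸ b.2)
        show B (e (Sum.inr a)) (e (Sum.inl b)) = 0
        have h5 : B (e (Sum.inr a)) (e (Sum.inl b)) = Jmat m (a : Fin m) (b : Fin m) := by
          show (s.piecewise A (Jmat m)) (a : Fin m) (b : Fin m) = _
          simp only [Finset.piecewise, if_neg a.2]
        rw [h5]
        simp [Jmat, hab]
      | inr b =>
        show B (e (Sum.inr a)) (e (Sum.inr b)) = (1 : Matrix {x // ¬ x ∈ s} {x // ¬ x ∈ s} ℂ) a b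
        have h5 : B (e (Sum.inr a)) (e (Sum.inr b)) = Jmat m (a : Fin m) (b : Fin m) := by
          show (s.piecewise A (Jmat m)) (a : Fin m) (b : Fin m) = _
          simp only [Finset.piecewise, if_neg a.2]
        rw [h5, Matrix.one_apply]
        simp [Jmat, Subtype.ext_iff]
  have h1 := Matrix.det_submatrix_equiv_self e B
  rw [← h1, hB, Matrix.det_fromBlocks_zero₂₁]
  simp [principalDet]

lemma det_add_smul_one {m : ℕ} (A : Matrix (Fin m) (Fin m) ℂ) (y : ℂ) :
    (A + y • (1 : Matrix (Fin m) (Fin m) ℂ)).det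
      = ∑ s : Finset (Fin m), y ^ (m - s.card) * principalDet A s := by
  classical
  rw [show (1 : Matrix (Fin m) (Fin m) ℂ) = Jmat m from (Jmat_eq_one m).symm]
  have h1 : (A + y • Jmat m).det
      = ∑ s : Finset (Fin m), Matrix.detRowAlternating (s.piecewise A (y • Jmat m)) :=
    Matrix.detRowAlternating.toMultilinearMap.map_add_univ A (y • Jmat m)
  rw [h1]
  refine Finset.sum_congr rfl fun s _ => ?_
  have h2 : s.piecewise A (y • Jmat m)
      = fun i => (if i ∈ s then (1 : ℂ) else y) • (s.piecewise A (Jmat m)) i := by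
    funext i
    by_cases hi : i ∈ s
    · simp only [Finset.piecewise, if_pos hi, one_smul]
    · simp only [Finset.piecewise, if_neg hi]
      rfl
  have h3 := Matrix.detRowAlternating.toMultilinearMap.map_smul_univ
      (fun i => if i ∈ s then (1 : ℂ) else y) (s.piecewise A (Jmat m))
  have h4 : (∏ i, if i ∈ s then (1 : ℂ) else y) = y ^ (m - s.card) := by
    rw [Finset.prod_ite, Finset.prod_const, Finset.prod_const, one_pow, one_mul]
    congr 1
    have h6 : Finset.univ.filter (fun i => ¬ i ∈ s) = sᶜ := by ext x; simp
    rw [h6, Finset.card_compl, Fintype.card_fin]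
  calc Matrix.detRowAlternating (s.piecewise A (y • Jmat m))
      = (∏ i, if i ∈ s then (1 : ℂ) else y) •
          Matrix.detRowAlternating (s.piecewise A (Jmat m)) := by
        rw [h2]; exact h3
    _ = y ^ (m - s.card) * principalDet A s := by
        rw [h4, smul_eq_mul]
        congr 1
        exact det_piecewise_one A s

lemma eval_charpoly_mat {k : ℕ} (A : Matrix (Fin k) (Fin k) ℂ) (x : ℂ) :
    A.charpoly.eval x = (x • (1 : Matrix (Fin k) (Fin k) ℂ) - A).det := by
  rw [Matrix.charpoly, _root_.eval_det, matPolyEquiv_charmatrix]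
  rw [Polynomial.eval_sub, Polynomial.eval_X, Polynomial.eval_C]
  congr 1
  ext i j
  simp [Matrix.scalar_apply, Matrix.one_apply, Matrix.diagonal]

lemma det_shift_eq_of_charpoly {k : ℕ} (A B : Matrix (Fin k) (Fin k) ℂ)
    (h : A.charpoly = B.charpoly) (y : ℂ) :
    (A + y • (1 : Matrix (Fin k) (Fin k) ℂ)).det
      = (B + y • (1 : Matrix (Fin k) (Fin k) ℂ)).det := by
  have hA : ((-y) • (1 : Matrix (Fin k) (Fin k) ℂ) - A)
      = -(A + y • (1 : Matrix (Fin k) (Fin k) ℂ)) := by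
    rw [neg_smul]; abel
  have hB : ((-y) • (1 : Matrix (Fin k) (Fin k) ℂ) - B)
      = -(B + y • (1 : Matrix (Fin k) (Fin k) ℂ)) := by
    rw [neg_smul]; abel
  have h1 := eval_charpoly_mat A (-y)
  have h2 := eval_charpoly_mat B (-y)
  rw [h, h2, hB, Matrix.det_neg] at h1
  rw [hA, Matrix.det_neg] at h1
  have hne : ((-1 : ℂ) ^ Fintype.card (Fin k)) ≠ 0 := pow_ne_zero _ (by norm_num)
  exact mul_left_cancel₀ hne h1.symm

lemma coeff_aux {k p : ℕ} (hp : p ≤ k) (c : Finset (Fin k) → ℂ) :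
    (∑ s : Finset (Fin k), Polynomial.C (c s) * Polynomial.X ^ (k - s.card)).coeff (k - p)
      = ∑ s ∈ Finset.univ.powersetCard p, c s := by
  classical
  rw [Polynomial.finset_sum_coeff]
  simp only [Polynomial.coeff_C_mul, Polynomial.coeff_X_pow, mul_ite, mul_one, mul_zero]
  have h1 : ∀ s : Finset (Fin k), (if k - p = k - s.card then c s else 0)
      = if s.card = p then c s else 0 := by
    intro s
    have hs : s.card ≤ k := by
      simpa using Finset.card_le_card (Finset.subset_univ s)
    by_cases h : s.card = p
    · rw [if_pos h, if_pos (by omega)]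
    · rw [if_neg h, if_neg (by omega)]
  rw [Finset.sum_congr rfl fun s _ => h1 s, ← Finset.sum_filter]
  congr 1
  ext s
  simp [Finset.mem_powersetCard, Finset.subset_univ]

lemma msum_eq_of_charpoly {k p : ℕ} (hp : p ≤ k) (A B : Matrix (Fin k) (Fin k) ℂ)
    (h : A.charpoly = B.charpoly) :
    ∑ s ∈ Finset.univ.powersetCard p, principalDet A s
      = ∑ s ∈ Finset.univ.powersetCard p, principalDet B s := by
  classical
  set P : Polynomial ℂ := ∑ s : Finset (Fin k),
    Polynomial.C (principalDet A s) * Polynomial.X ^ (k - s.card) with hP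
  set Q : Polynomial ℂ := ∑ s : Finset (Fin k),
    Polynomial.C (principalDet B s) * Polynomial.X ^ (k - s.card) with hQ
  have hPe : ∀ y : ℂ, P.eval y = (A + y • (1 : Matrix (Fin k) (Fin k) ℂ)).det := by
    intro y
    rw [det_add_smul_one, hP, Polynomial.eval_finset_sum]
    simp [Finset.sum_congr rfl fun s _ => mul_comm (principalDet A s) (y ^ (k - s.card))]
  have hQe : ∀ y : ℂ, Q.eval y = (B + y • (1 : Matrix (Fin k) (Fin k) ℂ)).det := by
    intro y
    rw [det_add_smul_one, hQ, Polynomial.eval_finset_sum]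
    simp [Finset.sum_congr rfl fun s _ => mul_comm (principalDet B s) (y ^ (k - s.card))]
  have hPQ : P = Q := by
    apply Polynomial.funext
    intro y
    rw [hPe, hQe, det_shift_eq_of_charpoly A B h]
  have hco := congrArg (fun q : Polynomial ℂ => q.coeff (k - p)) hPQ
  simpa only [hP, hQ, coeff_aux hp] using hco

lemma principalDet_submatrix {n m : ℕ} (M : Matrix (Fin n) (Fin n) ℂ) (f : Fin m → Fin n)
    (hf : Function.Injective f) (s : Finset (Fin m)) :
    principalDet (M.submatrix f f) s = principalDet M (s.image f) := by
  classical
  unfold principalDet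
  rw [Matrix.submatrix_submatrix]
  have hbij : Function.Bijective (fun x : {x // x ∈ s} =>
      (⟨f x, Finset.mem_image_of_mem f x.2⟩ : {y // y ∈ s.image f})) := by
    constructor
    · intro a b hab
      exact Subtype.ext (hf (congrArg Subtype.val hab))
    · rintro ⟨y, hy⟩
      obtain ⟨x, hx, rfl⟩ := Finset.mem_image.1 hy
      exact ⟨⟨x, hx⟩, rfl⟩
  let e := Equiv.ofBijective _ hbij
  have hcomp : (f ∘ fun i : {x // x ∈ s} => (i : Fin m))
      = (fun i : {y // y ∈ s.image f} => (i : Fin n)) ∘ e := rfl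
  rw [hcomp, ← Matrix.submatrix_submatrix]
  exact Matrix.det_submatrix_equiv_self e _

lemma sum_minor_image {n m : ℕ} (M : Matrix (Fin n) (Fin n) ℂ) (f : Fin m → Fin n)
    (hf : Function.Injective f) (p : ℕ) :
    ∑ s ∈ Finset.univ.powersetCard p, principalDet (M.submatrix f f) s
      = ∑ α ∈ (Finset.univ.image f).powersetCard p, principalDet M α := by
  classical
  refine Finset.sum_bij (fun s _ => s.image f) ?_ ?_ ?_ ?_
  · intro s hs
    rw [Finset.mem_powersetCard] at hs ⊢
    exact ⟨Finset.image_subset_image hs.1, by rw [Finset.card_image_of_injective _ hf, hs.2]⟩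
  · intro a ha b hb hab
    exact Finset.image_injective hf hab
  · intro α hα
    rw [Finset.mem_powersetCard] at hα
    obtain ⟨u, hu, hux⟩ := Finset.subset_image_iff.1 hα.1
    refine ⟨u, ?_, hux⟩
    rw [Finset.mem_powersetCard]
    refine ⟨Finset.subset_univ u, ?_⟩
    rw [← hα.2, ← hux, Finset.card_image_of_injective _ hf]
  · intro s hs
    exact principalDet_submatrix M f hf s

noncomputable def Usum {n : ℕ} (M : Matrix (Fin n) (Fin n) ℂ) (p : ℕ) (S : Finset (Fin n)) : ℂ :=
  ∑ α ∈ S.powersetCard p, principalDet M α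

lemma image_orderEmbOfFin {n k : ℕ} (K : Finset (Fin n)) (hK : K.card = k) :
    Finset.univ.image (⇑(K.orderEmbOfFin hK)) = K := by
  have h := Finset.range_orderEmbOfFin K hK
  ext x
  simp only [Finset.mem_image, Finset.mem_univ, true_and]
  constructor
  · rintro ⟨i, rfl⟩
    have h2 : K.orderEmbOfFin hK i ∈ Set.range (K.orderEmbOfFin hK) := ⟨i, rfl⟩
    rw [h] at h2
    exact h2
  · intro hx
    have h2 : x ∈ Set.range (K.orderEmbOfFin hK) := by rw [h]; exact hx
    exact h2

lemma U_const {n k p : ℕ} (M : Matrix (Fin n) (Fin n) ℂ) (hM : SpecMono k M) (hp : p ≤ k)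
    (K K' : Finset (Fin n)) (hK : K.card = k) (hK' : K'.card = k) :
    Usum M p K = Usum M p K' := by
  classical
  have hf : Function.Injective ⇑(K.orderEmbOfFin hK) := (K.orderEmbOfFin hK).injective
  have hg : Function.Injective ⇑(K'.orderEmbOfFin hK') := (K'.orderEmbOfFin hK').injective
  have hchar := hM _ _ hf hg
  have h1 := sum_minor_image M _ hf p
  have h2 := sum_minor_image M _ hg p
  rw [image_orderEmbOfFin K hK] at h1
  rw [image_orderEmbOfFin K' hK'] at h2
  unfold Usum
  rw [← h1, ← h2]
  exact msum_eq_of_charpoly hp _ _ hchar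

lemma count_supersets {n k p : ℕ} (hp : p ≤ k) (S α : Finset (Fin n))
    (hαS : α ⊆ S) (hαc : α.card = p) :
    ((S.powersetCard k).filter (fun K => α ⊆ K)).card = (S.card - p).choose (k - p) := by
  classical
  have hsd : (S \ α).card = S.card - p := by rw [Finset.card_sdiff_of_subset hαS, hαc]
  rw [← hsd, ← Finset.card_powersetCard]
  apply Finset.card_nbij' (fun K => K \ α) (fun L => L ∪ α)
  · intro K hK
    rw [Finset.mem_coe, Finset.mem_filter, Finset.mem_powersetCard] at hK
    obtain ⟨⟨hKS, hKc⟩, hαK⟩ := hK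
    rw [Finset.mem_coe, Finset.mem_powersetCard]
    exact ⟨Finset.sdiff_subset_sdiff hKS (Finset.Subset.refl α),
      by rw [Finset.card_sdiff_of_subset hαK, hKc, hαc]⟩
  · intro L hL
    rw [Finset.mem_coe, Finset.mem_powersetCard] at hL
    obtain ⟨hLS, hLc⟩ := hL
    have hdisj : Disjoint L α := Finset.disjoint_of_subset_left hLS Finset.sdiff_disjoint
    rw [Finset.mem_coe, Finset.mem_filter, Finset.mem_powersetCard]
    refine ⟨⟨Finset.union_subset (hLS.trans Finset.sdiff_subset) hαS, ?_⟩,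
      Finset.subset_union_right⟩
    rw [Finset.card_union_of_disjoint hdisj, hLc, hαc]
    omega
  · intro K hK
    rw [Finset.mem_coe, Finset.mem_filter] at hK
    exact Finset.sdiff_union_of_subset hK.2
  · intro L hL
    rw [Finset.mem_coe, Finset.mem_powersetCard] at hL
    exact Finset.union_sdiff_cancel_right
      (Finset.disjoint_of_subset_left hL.1 Finset.sdiff_disjoint)

lemma powersetCard_subset_eq {n k p : ℕ} (S K : Finset (Fin n)) (hK : K ∈ S.powersetCard k) :
    K.powersetCard p = (S.powersetCard p).filter (fun α => α ⊆ K) := by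
  classical
  rw [Finset.mem_powersetCard] at hK
  ext α
  rw [Finset.mem_filter, Finset.mem_powersetCard, Finset.mem_powersetCard]
  constructor
  · intro h
    exact ⟨⟨h.1.trans hK.1, h.2⟩, h.1⟩
  · intro h
    exact ⟨h.2, h.1.2⟩

lemma dc {n k p : ℕ} (M : Matrix (Fin n) (Fin n) ℂ) (hp : p ≤ k) (S : Finset (Fin n)) :
    ∑ K ∈ S.powersetCard k, Usum M p K = ((S.card - p).choose (k - p) : ℂ) * Usum M p S := by
  classical
  unfold Usum
  calc ∑ K ∈ S.powersetCard k, ∑ α ∈ K.powersetCard p, principalDet M α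
      = ∑ K ∈ S.powersetCard k, ∑ α ∈ S.powersetCard p,
          if α ⊆ K then principalDet M α else 0 := by
        refine Finset.sum_congr rfl fun K hK => ?_
        rw [powersetCard_subset_eq S K hK, Finset.sum_filter]
    _ = ∑ α ∈ S.powersetCard p, ∑ K ∈ S.powersetCard k,
          if α ⊆ K then principalDet M α else 0 := Finset.sum_comm
    _ = ∑ α ∈ S.powersetCard p, ((S.card - p).choose (k - p) : ℂ) * principalDet M α := by
        refine Finset.sum_congr rfl fun α hα => ?_
        rw [← Finset.sum_filter, Finset.sum_const]
        rw [Finset.mem_powersetCard] at hα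
        rw [count_supersets hp S α hα.1 hα.2, nsmul_eq_mul]
    _ = ((S.card - p).choose (k - p) : ℂ) * ∑ α ∈ S.powersetCard p, principalDet M α := by
        rw [Finset.mul_sum]

lemma U_eq_of_card {n k p : ℕ} (M : Matrix (Fin n) (Fin n) ℂ) (hM : SpecMono k M) (hp : p ≤ k)
    (S S' : Finset (Fin n)) (hS : k ≤ S.card) (h : S.card = S'.card) :
    Usum M p S = Usum M p S' := by
  classical
  obtain ⟨K₀, hK₀, hK₀c⟩ := Finset.exists_subset_card_eq hS
  have e1 : ∑ K ∈ S.powersetCard k, Usum M p K = (S.card.choose k : ℂ) * Usum M p K₀ := by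
    rw [Finset.sum_congr rfl (fun K hK => U_const M hM hp K K₀
      (Finset.mem_powersetCard.1 hK).2 hK₀c), Finset.sum_const,
      Finset.card_powersetCard, nsmul_eq_mul]
  have e2 : ∑ K ∈ S'.powersetCard k, Usum M p K = (S'.card.choose k : ℂ) * Usum M p K₀ := by
    rw [Finset.sum_congr rfl (fun K hK => U_const M hM hp K K₀
      (Finset.mem_powersetCard.1 hK).2 hK₀c), Finset.sum_const,
      Finset.card_powersetCard, nsmul_eq_mul]
  have h1 := dc M hp S
  have h2 := dc M hp S'
  rw [e1] at h1
  rw [e2] at h2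
  have hcne : (((S.card - p).choose (k - p) : ℕ) : ℂ) ≠ 0 :=
    Nat.cast_ne_zero.2 (Nat.choose_pos (by omega)).ne'
  apply mul_left_cancel₀ hcne
  rw [← h1, h, h2]

lemma T_eq {n p : ℕ} (M : Matrix (Fin n) (Fin n) ℂ) (β : Finset (Fin n)) :
    ∑ α ∈ (Finset.univ.powersetCard p).filter (fun α => β ⊆ α), principalDet M α
      = ∑ δ ∈ β.powerset, (-1 : ℂ) ^ δ.card * Usum M p δᶜ := by
  classical
  have step1 : ∀ δ : Finset (Fin n), Usum M p δᶜ
      = ∑ α ∈ Finset.univ.powersetCard p, if α ⊆ δᶜ then principalDet M α else 0 := by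
    intro δ
    unfold Usum
    rw [← Finset.sum_filter]
    congr 1
    ext α
    simp only [Finset.mem_powersetCard, Finset.mem_filter, Finset.subset_univ, true_and]
    tauto
  calc ∑ α ∈ (Finset.univ.powersetCard p).filter (fun α => β ⊆ α), principalDet M α
      = ∑ α ∈ Finset.univ.powersetCard p, if β ⊆ α then principalDet M α else 0 :=
        (Finset.sum_filter _ _)
    _ = ∑ α ∈ Finset.univ.powersetCard p,
          ∑ δ ∈ β.powerset, (-1 : ℂ) ^ δ.card * (if α ⊆ δᶜ then principalDet M α else 0) := by
        refine Finset.sum_congr rfl fun α _ => ?_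
        have hfilt : β.powerset.filter (fun δ => α ⊆ δᶜ) = (β \ α).powerset := by
          ext δ
          rw [Finset.mem_filter, Finset.mem_powerset, Finset.mem_powerset, Finset.subset_sdiff]
          have had : α ⊆ δᶜ ↔ Disjoint δ α := by
            constructor
            · intro h
              exact Finset.disjoint_left.2 fun a haδ haα => Finset.mem_compl.1 (h haα) haδ
            · intro h a haα
              exact Finset.mem_compl.2 fun haδ => Finset.disjoint_left.1 h haδ haα
          exact and_congr_right fun _ => had
        have hmain : ∑ δ ∈ β.powerset, (-1 : ℂ) ^ δ.card * (if α ⊆ δᶜ then principalDet M α else 0)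
            = ∑ δ ∈ (β \ α).powerset, (-1 : ℂ) ^ δ.card * principalDet M α := by
          rw [← hfilt, Finset.sum_filter]
          refine Finset.sum_congr rfl fun δ _ => ?_
          by_cases h : α ⊆ δᶜ <;> simp [h]
        rw [hmain, ← Finset.sum_mul]
        have hsum : (∑ δ ∈ (β \ α).powerset, (-1 : ℂ) ^ δ.card)
            = if β \ α = ∅ then 1 else 0 := by
          have hz := Finset.sum_powerset_neg_one_pow_card (x := β \ α)
          have hc : ((∑ δ ∈ (β \ α).powerset, (-1 : ℤ) ^ δ.card : ℤ) : ℂ)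
              = ∑ δ ∈ (β \ α).powerset, (-1 : ℂ) ^ δ.card := by push_cast; rfl
          rw [← hc, hz]
          split_ifs <;> simp
        rw [hsum]
        by_cases h : β ⊆ α
        · rw [if_pos ((Finset.sdiff_eq_empty_iff_subset).2 h), if_pos h, one_mul]
        · rw [if_neg (fun he => h (Finset.sdiff_eq_empty_iff_subset.1 he)), if_neg h, zero_mul]
    _ = ∑ δ ∈ β.powerset, (-1 : ℂ) ^ δ.card * Usum M p δᶜ := by
        rw [Finset.sum_comm]
        refine Finset.sum_congr rfl fun δ _ => ?_
        rw [step1 δ, Finset.mul_sum]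

theorem stmt_7 (n k p : ℕ) (hk3 : 3 ≤ k) (hkn : k ≤ n - 1) (hp : p ≤ k)
    (M : Matrix (Fin n) (Fin n) ℂ) (hM : SpecMono k M)
    (β β' : Finset (Fin n)) (hβ : β.card ≤ n - k) (hβ' : β'.card ≤ n - k)
    (hcard : β.card = β'.card) :
    ∑ α ∈ (Finset.univ.powersetCard p).filter (fun α => β ⊆ α), principalDet M α =
      ∑ α ∈ (Finset.univ.powersetCard p).filter (fun α => β' ⊆ α), principalDet M α := by
  classical
  have hn : 4 ≤ n := by omega
  rw [T_eq M β, T_eq M β']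
  rw [Finset.sum_powerset,
      Finset.sum_powerset, hcard]
  refine Finset.sum_congr rfl fun j hj => ?_
  rw [Finset.mem_range] at hj
  have hjb : j ≤ β.card := by omega
  obtain ⟨δ₀, hδ₀s, hδ₀c⟩ := Finset.exists_subset_card_eq hjb
  have hval : ∀ δ : Finset (Fin n), δ.card = j → Usum M p δᶜ = Usum M p δ₀ᶜ := by
    intro δ hδc
    apply U_eq_of_card M hM hp
    · rw [Finset.card_compl, Fintype.card_fin, hδc]
      omega
    · rw [Finset.card_compl, Finset.card_compl, hδc, hδ₀c]
  have hL : ∑ δ ∈ β.powersetCard j, (-1 : ℂ) ^ δ.card * Usum M p δᶜ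
      = (β.card.choose j : ℂ) * ((-1 : ℂ) ^ j * Usum M p δ₀ᶜ) := by
    rw [Finset.sum_congr rfl fun δ hδ => ?_, Finset.sum_const,
      Finset.card_powersetCard, nsmul_eq_mul]
    have hδc := (Finset.mem_powersetCard.1 hδ).2
    rw [hδc, hval δ hδc]
  have hR : ∑ δ ∈ β'.powersetCard j, (-1 : ℂ) ^ δ.card * Usum M p δᶜ
      = (β'.card.choose j : ℂ) * ((-1 : ℂ) ^ j * Usum M p δ₀ᶜ) := by
    rw [Finset.sum_congr rfl fun δ hδ => ?_, Finset.sum_const,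
      Finset.card_powersetCard, nsmul_eq_mul]
    have hδc := (Finset.mem_powersetCard.1 hδ).2
    rw [hδc, hval δ hδc]
  rw [hL, hR, hcard]
end
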